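/- arXiv:1512.05479 — 2 statements merged into one kernel-verified Lean document; each statement's English description precedes it below -/
import Mathlib

section
/- For every natural number k ≥ 1, the (k+1)-st iterated complex derivative of the function g(z) = z/(z+i)^k, evaluated at z = i, equals (2k-1)!/((k-1)! · 4^k). -/
open Complex Finset

lemma my_iteratedDerivWithin_of_isOpen {f : ℂ → ℂ} {s : Set ℂ} {x : ℂ} (n : ℕ)
    (hs : IsOpen s) (hx : x ∈ s) :
    iteratedDerivWithin n f s x = iteratedDeriv n f x := by
  simp only [iteratedDerivWithin, iteratedDeriv, iteratedFDerivWithin_of_isOpen n hs hx]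

lemma my_asc_prod (n k : ℕ) :
    (∏ i ∈ Finset.range k, ((n : ℂ) + i)) = (n.ascFactorial k : ℂ) := by
  induction k with
  | zero => simp
  | succ k ih => rw [prod_range_succ, ih, Nat.ascFactorial_succ]; push_cast; ring

lemma key_zpow (m : ℤ) (n : ℕ) :
    iteratedDeriv n (fun z : ℂ => (z + I) ^ m) I
      = (∏ i ∈ Finset.range n, ((m : ℂ) - i)) * (2 * I) ^ (m - n) := by
  have := congrFun (iteratedDeriv_comp_add_const n (fun y : ℂ => y ^ m) I) I
  rw [this, iteratedDeriv_eq_iterate, iter_deriv_zpow]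
  norm_num [two_mul]

lemma contDiffOn_zpow_shift (m : ℤ) (n : ℕ) :
    ContDiffOn ℂ n (fun z : ℂ => (z + I) ^ m) {(-I)}ᶜ := by
  apply DifferentiableOn.contDiffOn _ isOpen_compl_singleton
  intro z hz
  have hz0 : z + I ≠ 0 := by
    intro h
    exact hz (by simpa [eq_neg_iff_add_eq_zero] using h)
  exact ((differentiableAt_zpow.2 (Or.inl hz0)).comp z
    ((differentiableAt_id.add_const I))).differentiableWithinAt

lemma natN (k : ℕ) (hk : 1 ≤ k) :
    Nat.factorial (k-1) * Nat.ascFactorial k (k+1)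
      = 2 * Nat.factorial (2*k-1) + 2 * (Nat.factorial (k-1) * Nat.ascFactorial (k-1) (k+1)) := by
  obtain ⟨m, rfl⟩ : ∃ m, k = m + 1 := ⟨k - 1, (Nat.succ_pred_eq_of_pos hk).symm⟩
  simp only [Nat.add_sub_cancel]
  have h1 : Nat.factorial m * Nat.ascFactorial (m+1) (m+2) = Nat.factorial (m + (m+2)) :=
    Nat.factorial_mul_ascFactorial m (m+2)
  have e : 2 * (m+1) - 1 = 2*m + 1 := by omega
  rw [e, h1, show m + (m+2) = (2*m+1) + 1 by omega, Nat.factorial_succ]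
  cases m with
  | zero => simp [Nat.zero_ascFactorial]
  | succ j =>
    have h2 : Nat.factorial j * Nat.ascFactorial (j+1) (j+1+2) = Nat.factorial (j + (j+1+2)) :=
      Nat.factorial_mul_ascFactorial j (j+1+2)
    have h3 : Nat.factorial (j+1) * Nat.ascFactorial (j+1) (j+1+2)
        = (j+1) * Nat.factorial (j + (j+1+2)) := by
      rw [Nat.factorial_succ, mul_assoc, h2]
    rw [h3, show j + (j+1+2) = 2*(j+1)+1 by omega]
    ring

/-- For `k ≥ 1`, the `(k+1)`-st iterated complex derivative of `g(z) = z/(z+i)^k`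
at `z = i` equals `(2k-1)!/((k-1)! · 4^k)`. -/
theorem stmt_2 (k : ℕ) (hk : 1 ≤ k) :
    iteratedDeriv (k + 1) (fun z : ℂ => z / (z + I) ^ k) I
      = (Nat.factorial (2 * k - 1) : ℂ) / ((Nat.factorial (k - 1) : ℂ) * 4 ^ k) := by
  have hs : IsOpen ({(-I)}ᶜ : Set ℂ) := isOpen_compl_singleton
  have hI : I ∈ ({(-I)}ᶜ : Set ℂ) := by
    simp only [Set.mem_compl_iff, Set.mem_singleton_iff]
    intro h
    have := congrArg Complex.im h
    norm_num at this
  have hu : UniqueDiffOn ℂ ({(-I)}ᶜ : Set ℂ) := hs.uniqueDiffOn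
  have hEq : (fun z : ℂ => z / (z + I) ^ k) =ᶠ[nhds I]
      (fun z : ℂ => (z + I) ^ ((1 : ℤ) - k) - I * (z + I) ^ (-(k : ℤ))) := by
    filter_upwards [hs.mem_nhds hI] with z hz
    have hz0 : z + I ≠ 0 := by
      intro h
      exact hz (by simpa [eq_neg_iff_add_eq_zero] using h)
    rw [zpow_sub₀ hz0, zpow_one, zpow_neg, zpow_natCast]
    field_simp
    ring
  rw [Filter.EventuallyEq.iteratedDeriv_eq _ hEq,
    ← my_iteratedDerivWithin_of_isOpen (k+1) hs hI,
    show (fun z : ℂ => (z + I) ^ ((1:ℤ) - k) - I * (z + I) ^ (-(k:ℤ)))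
      = (fun z : ℂ => (z + I) ^ ((1:ℤ) - k)) - (fun z : ℂ => I * (z + I) ^ (-(k:ℤ))) from rfl,
    iteratedDerivWithin_sub hI hu ((contDiffOn_zpow_shift _ _).contDiffWithinAt hI)
      ((contDiffOn_const.mul (contDiffOn_zpow_shift _ _)).contDiffWithinAt hI),
    iteratedDerivWithin_const_mul hI hu I ((contDiffOn_zpow_shift _ _).contDiffWithinAt hI),
    my_iteratedDerivWithin_of_isOpen (k+1) hs hI,
    my_iteratedDerivWithin_of_isOpen (k+1) hs hI,
    key_zpow, key_zpow]
  have e1 : (1 - (k:ℤ)) - ((k+1 : ℕ) : ℤ) = -((2*k : ℕ) : ℤ) := by push_cast; ring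
  have e2 : (-(k:ℤ)) - ((k+1 : ℕ) : ℤ) = -((2*k+1 : ℕ) : ℤ) := by push_cast; ring
  rw [e1, e2, zpow_neg, zpow_neg, zpow_natCast, zpow_natCast]
  have hkc : ((k-1 : ℕ) : ℂ) = (k:ℂ) - 1 := by
    rw [Nat.cast_sub hk]; norm_num
  have hp1 : (∏ i ∈ Finset.range (k+1), ((((1:ℤ) - k : ℤ) : ℂ) - i))
      = (-1)^(k+1) * ((k-1).ascFactorial (k+1) : ℂ) := by
    calc (∏ i ∈ Finset.range (k+1), ((((1:ℤ) - k : ℤ) : ℂ) - i))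
        = ∏ i ∈ Finset.range (k+1), (-1) * (((k-1:ℕ):ℂ) + i) :=
          prod_congr rfl (fun i _ => by rw [hkc]; push_cast; ring)
      _ = (-1)^(k+1) * ((k-1).ascFactorial (k+1) : ℂ) := by
          rw [prod_mul_distrib, prod_const, card_range, my_asc_prod]
  have hp2 : (∏ i ∈ Finset.range (k+1), (((-(k:ℤ) : ℤ) : ℂ) - i))
      = (-1)^(k+1) * (k.ascFactorial (k+1) : ℂ) := by
    calc (∏ i ∈ Finset.range (k+1), (((-(k:ℤ) : ℤ) : ℂ) - i))
        = ∏ i ∈ Finset.range (k+1), (-1) * (((k:ℕ):ℂ) + i) :=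
          prod_congr rfl (fun i _ => by push_cast; ring)
      _ = (-1)^(k+1) * (k.ascFactorial (k+1) : ℂ) := by
          rw [prod_mul_distrib, prod_const, card_range, my_asc_prod]
  rw [hp1, hp2]
  have hpow1 : ((2*I : ℂ)^(2*k)) = (-1)^k * 4^k := by
    rw [pow_mul, show (2*I:ℂ)^2 = -1*4 by rw [mul_pow, I_sq]; norm_num, mul_pow]
  have hpow2 : ((2*I : ℂ)^(2*k+1)) = (-1)^k * 4^k * (2*I) := by rw [pow_succ, hpow1]
  rw [hpow1, hpow2]
  have hAc : (((k-1).factorial : ℂ)) * ((Nat.ascFactorial k (k+1) : ℕ) : ℂ)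
      = 2 * (((2*k-1).factorial : ℕ) : ℂ)
        + 2 * (((k-1).factorial : ℂ) * (((k-1).ascFactorial (k+1) : ℕ) : ℂ)) := by
    exact_mod_cast congrArg (Nat.cast : ℕ → ℂ) (natN k hk)
  have hone : (-1:ℂ)^k * (-1)^k = 1 := by rw [← mul_pow]; norm_num
  have h4 : (4:ℂ)^k ≠ 0 := pow_ne_zero _ (by norm_num)
  have hf : ((k-1).factorial : ℂ) ≠ 0 := Nat.cast_ne_zero.2 (Nat.factorial_ne_zero _)
  have hm1 : (-1:ℂ)^k ≠ 0 := by
    intro h; rw [h, zero_mul] at hone; exact one_ne_zero hone.symm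
  field_simp
  linear_combination ((-1:ℂ)^k) * hAc
end

section
/- For every natural number k ≥ 1, the improper complex integral ∫_{-∞}^{∞} x/((x-i)^2 (1+x^2)^k) dx equals πi·(2k-1)!/(2^{2k-1}·(k+1)!·(k-1)!). -/
open MeasureTheory Complex

open Real Set in
private lemma wallis_aux (n : ℕ) :
    ∫ θ in (-(π/2))..(π/2), Real.cos θ ^ (2*n)
      = π * ((2*n).factorial : ℝ) / (4^n * ((n.factorial : ℝ))^2) := by
  induction n with
  | zero => simp
  | succ n ih =>
    have h := integral_cos_pow (a := -(π/2)) (b := π/2) (n := 2*n)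
    rw [show 2*(n+1) = 2*n+2 by ring, h, ih]
    rw [Real.cos_pi_div_two, show -(π/2) = π/2 - π by ring, Real.cos_sub_pi,
      Real.cos_pi_div_two]
    have h1 : ((2*n+2).factorial : ℝ) = (2*n+2) * ((2*n+1) * ((2*n).factorial : ℝ)) := by
      rw [show 2*n+2 = (2*n+1)+1 by ring, Nat.factorial_succ, Nat.factorial_succ]
      push_cast; ring
    have h2 : ((n+1).factorial : ℝ) = (n+1) * (n.factorial : ℝ) := by
      rw [Nat.factorial_succ]; push_cast; ring
    rw [h1, h2]
    have hf : (n.factorial : ℝ) ≠ 0 := Nat.cast_ne_zero.2 n.factorial_ne_zero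
    have h4 : (4:ℝ)^n ≠ 0 := by positivity
    have hz : (0:ℝ) ^ (2*n+1) = 0 := zero_pow (by omega)
    rw [neg_zero, hz]
    push_cast
    have hn2 : (2*(n:ℝ)+2) ≠ 0 := by positivity
    have hn1 : ((n:ℝ)+1) ≠ 0 := by positivity
    field_simp
    ring

open Real Set in
private lemma odd_sin_aux (n : ℕ) :
    ∫ θ in (-(π/2))..(π/2), Real.sin θ * Real.cos θ ^ (2*n+1) = 0 := by
  have key : ∀ θ : ℝ, HasDerivAt (fun x => -Real.cos x ^ (2*n+2) / (2*n+2))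
      (Real.sin θ * Real.cos θ ^ (2*n+1)) θ := by
    intro θ
    have h := ((Real.hasDerivAt_cos θ).pow (2*n+2)).neg.div_const ((2*n+2 : ℕ) : ℝ)
    have he : -(((2*n+2 : ℕ) : ℝ) * Real.cos θ ^ (2*n+2-1) * -Real.sin θ) / ((2*n+2 : ℕ) : ℝ)
        = Real.sin θ * Real.cos θ ^ (2*n+1) := by
      rw [show 2*n+2-1 = 2*n+1 by omega]
      have : ((2*n+2 : ℕ) : ℝ) ≠ 0 := by positivity
      field_simp
    rw [he] at h
    have e : (fun x => -Real.cos x ^ (2*n+2) / (2*n+2)) = (fun x => (-Real.cos ^ (2*n+2)) x / ((2*n+2 : ℕ) : ℝ)) := by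
      funext x; simp only [Pi.neg_apply, Pi.pow_apply]; push_cast; ring
    rw [e]; exact h
  rw [intervalIntegral.integral_eq_sub_of_hasDerivAt (fun θ _ => key θ)
    (by apply Continuous.intervalIntegrable; fun_prop)]
  rw [Real.cos_pi_div_two, show -(π/2) = π/2 - π by ring, Real.cos_sub_pi,
      Real.cos_pi_div_two]
  simp

private lemma key_alg (j : ℕ) (S C : ℂ) (hC : C ≠ 0) (h1 : S^2 + C^2 = 1)
    (hSC : S - I*C ≠ 0) :
    (1/C^2) * ((S/C) / ((S/C - I)^2 * (1 + (S/C)^2)^(j+1)))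
      = (S*C^(2*j+1) - 2*S*C^(2*j+3)) + (2*S^2*C^(2*j+2)) * I := by
  have e3 : (S - I*C)^2 * ((1 - 2*C^2) + 2*I*S*C) = 1 := by
    linear_combination (1 + 2*C^2 + 2*I*S*C) * h1 +
      (C^2 - 2*C^4 - 4*S^2*C^2 + 2*I*S*C^3) * Complex.I_sq
  have hD : (S - I*C)^2 ≠ 0 := pow_ne_zero _ hSC
  have e5 : 1/(S - I*C)^2 = (1 - 2*C^2) + 2*I*S*C := by
    rw [div_eq_iff hD]; linear_combination -e3
  have e1 : 1 + (S/C)^2 = 1/C^2 := by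
    field_simp; linear_combination h1
  have e2 : (S/C - I)^2 = (S - I*C)^2/C^2 := by
    field_simp
  rw [e1, e2]
  have estep : (1/C^2) * ((S/C) / ((S - I*C)^2/C^2 * (1/C^2)^(j+1)))
      = S*C^(2*j+1) * (1/(S - I*C)^2) := by
    rw [div_pow, one_pow]
    have h2 : ((C^2)^(j+1)) ≠ 0 := pow_ne_zero _ (pow_ne_zero _ hC)
    field_simp
    ring
  rw [estep, e5]
  ring

/-- For `k ≥ 1`, `∫_{-∞}^{∞} x/((x-i)² (1+x²)^k) dx
  = πi·(2k-1)!/(2^{2k-1}·(k+1)!·(k-1)!)`. -/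
theorem stmt_3 (k : ℕ) (hk : 1 ≤ k) :
    ∫ x : ℝ, (x : ℂ) / (((x : ℂ) - I) ^ 2 * (1 + (x : ℂ) ^ 2) ^ k)
      = (Real.pi : ℂ) * I * (Nat.factorial (2 * k - 1) : ℂ) /
        (2 ^ (2 * k - 1) * (Nat.factorial (k + 1) : ℂ) * (Nat.factorial (k - 1) : ℂ)) := by
  obtain ⟨j, rfl⟩ : ∃ j, k = j + 1 := ⟨k - 1, by omega⟩
  set π := Real.pi
  have hab : -(π/2) ≤ π/2 := by
    have := Real.pi_pos; simp only [π]; linarith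
  set g : ℝ → ℂ := fun x => (x : ℂ) / (((x : ℂ) - I) ^ 2 * (1 + (x : ℂ) ^ 2) ^ (j+1)) with hg
  set w : ℝ → ℂ := fun θ =>
      ((Real.sin θ * Real.cos θ ^ (2*j+1) - 2 * (Real.sin θ * Real.cos θ ^ (2*(j+1)+1)) : ℝ) : ℂ)
      + ((2 * Real.cos θ ^ (2*(j+1)) - 2 * Real.cos θ ^ (2*(j+2)) : ℝ) : ℂ) * I with hw
  have hderiv : ∀ x ∈ Set.Ioo (-(π/2)) (π/2),
      HasDerivWithinAt Real.tan (1 / Real.cos x ^ 2) (Set.Ioo (-(π/2)) (π/2)) x :=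
    fun x hx => (Real.hasDerivAt_tan (Real.cos_pos_of_mem_Ioo hx).ne').hasDerivWithinAt
  have step1 : (∫ x : ℝ, g x)
      = ∫ θ in Set.Ioo (-(π/2)) (π/2), |1 / Real.cos θ ^ 2| • g (Real.tan θ) := by
    rw [← setIntegral_univ, ← Real.image_tan_Ioo,
      integral_image_eq_integral_abs_deriv_smul measurableSet_Ioo hderiv Real.injOn_tan g]
  have step2 : ∀ θ ∈ Set.Ioo (-(π/2)) (π/2),
      |1 / Real.cos θ ^ 2| • g (Real.tan θ) = w θ := by
    intro θ hθ
    have hcpos : 0 < Real.cos θ := Real.cos_pos_of_mem_Ioo hθ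
    have hC : ((Real.cos θ : ℂ)) ≠ 0 := by
      exact_mod_cast (Complex.ofReal_ne_zero.2 hcpos.ne')
    have h1 : ((Real.sin θ : ℂ))^2 + ((Real.cos θ : ℂ))^2 = 1 := by
      exact_mod_cast congrArg (fun r : ℝ => (r : ℂ)) (Real.sin_sq_add_cos_sq θ)
    have hSC : (Real.sin θ : ℂ) - I * (Real.cos θ : ℂ) ≠ 0 := by
      intro h
      have him := congrArg Complex.im h
      simp at him
      exact hcpos.ne' him
    have habs : |1 / Real.cos θ ^ 2| = 1 / Real.cos θ ^ 2 := abs_of_pos (by positivity)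
    rw [habs, Complex.real_smul, hg]
    simp only [Real.tan_eq_sin_div_cos, Complex.ofReal_div, Complex.ofReal_one,
      Complex.ofReal_pow]
    rw [key_alg j _ _ hC h1 hSC, hw]
    simp only [Complex.ofReal_sub, Complex.ofReal_mul, Complex.ofReal_pow,
      Complex.ofReal_ofNat]
    linear_combination (2*((Real.cos θ : ℂ))^(2*j+2)*I) * h1
  rw [step1, setIntegral_congr_fun measurableSet_Ioo step2]
  have step3 : (∫ θ in Set.Ioo (-(π/2)) (π/2), w θ) = ∫ θ in (-(π/2))..(π/2), w θ := by
    rw [intervalIntegral.integral_of_le hab, integral_Ioc_eq_integral_Ioo]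
  rw [step3]
  have hu : ∀ n : ℕ, IntervalIntegrable
      (fun θ : ℝ => Real.sin θ * Real.cos θ ^ n) volume (-(π/2)) (π/2) := by
    intro n; apply Continuous.intervalIntegrable; fun_prop
  have hcn : ∀ n : ℕ, IntervalIntegrable
      (fun θ : ℝ => Real.cos θ ^ n) volume (-(π/2)) (π/2) := by
    intro n; apply Continuous.intervalIntegrable; fun_prop
  have split : (∫ θ in (-(π/2))..(π/2), w θ)
      = (((∫ θ in (-(π/2))..(π/2),
            (Real.sin θ * Real.cos θ ^ (2*j+1) - 2 * (Real.sin θ * Real.cos θ ^ (2*(j+1)+1)))) : ℝ) : ℂ)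
        + (((∫ θ in (-(π/2))..(π/2),
            (2 * Real.cos θ ^ (2*(j+1)) - 2 * Real.cos θ ^ (2*(j+2)))) : ℝ) : ℂ) * I := by
    rw [hw]
    rw [intervalIntegral.integral_add, intervalIntegral.integral_mul_const,
      intervalIntegral.integral_ofReal, intervalIntegral.integral_ofReal]
    · apply Continuous.intervalIntegrable
      fun_prop
    · apply Continuous.intervalIntegrable
      fun_prop
  rw [split]
  have hre : (∫ θ in (-(π/2))..(π/2),
      (Real.sin θ * Real.cos θ ^ (2*j+1) - 2 * (Real.sin θ * Real.cos θ ^ (2*(j+1)+1)))) = 0 := by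
    rw [intervalIntegral.integral_sub (hu _) (((hu (2*(j+1)+1)).const_mul 2)),
      intervalIntegral.integral_const_mul, odd_sin_aux j, odd_sin_aux (j+1)]
    ring
  have him : (∫ θ in (-(π/2))..(π/2),
      (2 * Real.cos θ ^ (2*(j+1)) - 2 * Real.cos θ ^ (2*(j+2))))
      = π * ((2*j+1).factorial : ℝ) / (2^(2*j+1) * ((j+2).factorial : ℝ) * ((j).factorial : ℝ)) := by
    rw [intervalIntegral.integral_sub ((hcn _).const_mul 2) ((hcn _).const_mul 2),
      intervalIntegral.integral_const_mul, intervalIntegral.integral_const_mul,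
      wallis_aux (j+1), wallis_aux (j+2)]
    have e1 : ((2*(j+1)).factorial : ℝ) = (2*j+2) * ((2*j+1).factorial : ℝ) := by
      rw [show 2*(j+1) = (2*j+1)+1 by ring, Nat.factorial_succ]; push_cast; ring
    have e2 : ((2*(j+2)).factorial : ℝ)
        = (2*j+4) * ((2*j+3) * ((2*j+2) * ((2*j+1).factorial : ℝ))) := by
      rw [show 2*(j+2) = ((2*j+1)+1+1)+1 by ring, Nat.factorial_succ, Nat.factorial_succ,
        Nat.factorial_succ]
      push_cast; ring
    have e3 : ((j+1).factorial : ℝ) = (j+1) * ((j).factorial : ℝ) := by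
      rw [Nat.factorial_succ]; push_cast; ring
    have e4 : ((j+2).factorial : ℝ) = (j+2) * ((j+1) * ((j).factorial : ℝ)) := by
      rw [show j+2 = (j+1)+1 by ring, Nat.factorial_succ, Nat.factorial_succ]; push_cast; ring
    rw [e1, e2, e3, e4]
    have hf : ((j).factorial : ℝ) ≠ 0 := Nat.cast_ne_zero.2 (Nat.factorial_ne_zero j)
    have h4 : (4:ℝ)^j ≠ 0 := by positivity
    have h2 : (2:ℝ)^(2*j+1) ≠ 0 := by positivity
    have hj1 : ((j:ℝ)+1) ≠ 0 := by positivity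
    have hj2 : ((j:ℝ)+2) ≠ 0 := by positivity
    have hfac : ((2*j+1).factorial : ℝ) ≠ 0 := Nat.cast_ne_zero.2 (Nat.factorial_ne_zero _)
    rw [show (4:ℝ)^(j+1) = 4^j*4 by ring, show (4:ℝ)^(j+2) = 4^j*16 by ring,
      show (2:ℝ)^(2*j+1) = 4^j*2 by rw [show 2*j+1 = 2*j+1 from rfl]; rw [pow_succ, pow_mul]; norm_num]
    field_simp
    ring
  rw [hre, him]
  rw [show 2*(j+1)-1 = 2*j+1 by omega, show (j+1)-1 = j by omega, show (j+1)+1 = j+2 by omega]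
  push_cast
  have d1 : ((2:ℂ))^(2*j+1) ≠ 0 := pow_ne_zero _ two_ne_zero
  have d2 : (((j+2).factorial : ℝ) : ℂ) ≠ 0 := by
    exact_mod_cast Nat.cast_ne_zero.2 (Nat.factorial_ne_zero (j+2))
  have d3 : (((j).factorial : ℝ) : ℂ) ≠ 0 := by
    exact_mod_cast Nat.cast_ne_zero.2 (Nat.factorial_ne_zero j)
  field_simp
  ring
end
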